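/- For any x with 1 ≤ x ≤ √2, a unit square can contain an L-shape with legs of lengths x and x - x·√(x² - 1). -/

import Mathlib

open Set Metric

noncomputable section

abbrev E2 := EuclideanSpace ℝ (Fin 2)

def unitSq : Set E2 := {p | p 0 ∈ Set.Icc (0:ℝ) 1 ∧ p 1 ∈ Set.Icc (0:ℝ) 1}

def IsUnitSquare (S : Set E2) : Prop := ∃ f : E2 ≃ᵢ E2, S = f '' unitSq

def pt (a b : ℝ) : E2 := WithLp.toLp 2 ![a, b]

lemma pt_dist (a b c d : ℝ) : dist (pt a b) (pt c d) = Real.sqrt ((a-c)^2 + (b-d)^2) := by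
  rw [EuclideanSpace.dist_eq, Fin.sum_univ_two]
  simp [pt, Real.dist_eq, sq_abs]

lemma pt_inner (a b c d : ℝ) : inner ℝ (pt a b) (pt c d) = a*c + b*d := by
  rw [PiLp.inner_apply, Fin.sum_univ_two]
  simp [pt, mul_comm]

lemma pt_sub (a b c d : ℝ) : pt a b - pt c d = pt (a-c) (b-d) := by
  ext i; fin_cases i <;> simp [pt]

lemma pt_mem (a b : ℝ) (ha : a ∈ Set.Icc (0:ℝ) 1) (hb : b ∈ Set.Icc (0:ℝ) 1) :
    pt a b ∈ unitSq := by
  constructor <;> simpa [pt]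

lemma convex_unitSq : Convex ℝ unitSq := by
  intro p hp q hq m n hm hn hmn
  constructor
  · have h1 := hp.1; have h2 := hq.1
    have : (m • p + n • q) 0 = m * p 0 + n * q 0 := rfl
    rw [this]
    constructor
    · nlinarith [h1.1, h2.1]
    · nlinarith [h1.2, h2.2]
  · have h1 := hp.2; have h2 := hq.2
    have : (m • p + n • q) 1 = m * p 1 + n * q 1 := rfl
    rw [this]
    constructor
    · nlinarith [h1.1, h2.1]
    · nlinarith [h1.2, h2.2]

theorem Lshape_embeddable (x : ℝ) (hx1 : 1 ≤ x) (hx2 : x ≤ Real.sqrt 2) :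
    ∃ (S : Set E2) (c p q : E2), IsUnitSquare S ∧
      dist c p = x ∧ dist c q = x - x * Real.sqrt (x ^ 2 - 1) ∧
      inner ℝ (p - c) (q - c) = (0:ℝ) ∧
      segment ℝ c p ∪ segment ℝ c q ⊆ S := by
  set s : ℝ := Real.sqrt (x ^ 2 - 1) with hs
  have hx0 : (0:ℝ) ≤ x := by linarith
  have hs0 : 0 ≤ s := Real.sqrt_nonneg _
  have hs2 : s ^ 2 = x ^ 2 - 1 := Real.sq_sqrt (by nlinarith)
  have hx2' : x ^ 2 ≤ 2 := by
    nlinarith [Real.sq_sqrt (show (0:ℝ) ≤ 2 by norm_num), Real.sqrt_nonneg 2]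
  have hs1 : s ≤ 1 := by nlinarith
  refine ⟨unitSq, pt 0 (1 - s), pt 1 1, pt (s * (1 - s)) 0,
    ⟨IsometryEquiv.refl E2, by ext z; exact ⟨fun h => ⟨z, h, rfl⟩, by rintro ⟨w, hw, rfl⟩; exact hw⟩⟩, ?_, ?_, ?_, ?_⟩
  · rw [pt_dist]
    rw [show (0 - 1 : ℝ)^2 + ((1 - s) - 1)^2 = x ^ 2 by ring_nf; linarith]
    exact Real.sqrt_sq hx0
  · rw [pt_dist]
    have : (0 - s * (1 - s) : ℝ)^2 + ((1 - s) - 0)^2 = ((1 - s) * x) ^ 2 := by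
      ring_nf; nlinarith
    rw [this, Real.sqrt_sq (by nlinarith)]
    ring
  · rw [pt_sub, pt_sub, pt_inner]; ring
  · intro z hz
    have hc : pt 0 (1 - s) ∈ unitSq := pt_mem _ _ (by constructor <;> norm_num) (by constructor <;> linarith)
    rcases hz with hz | hz
    · exact convex_unitSq.segment_subset hc
        (pt_mem 1 1 (by norm_num) (by norm_num)) hz
    · exact convex_unitSq.segment_subset hc
        (pt_mem _ _ ⟨by nlinarith, by nlinarith⟩ (by norm_num)) hz

end
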